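/- arXiv:1103.2959 — 2 statements merged into one kernel-verified Lean document; each statement's English description precedes it below -/
import Mathlib

section
/- The binary affine cube AG(3,2) has no regular elements: for every element e, at least one of AG(3,2) \ e and AG(3,2) / e is non-regular. -/
open Matroid Set

variable {α β : Type*}

/-- Deletion of a set of elements. -/
def Matroid.del (M : Matroid α) (D : Set α) : Matroid α := M ↾ (M.E \ D)

/-- Contraction of a set of elements. -/
def Matroid.con (M : Matroid α) (C : Set α) : Matroid α := (M✶.del C)✶

/-- The rank of a set: the supremum of cardinalities of independent subsets. -/
noncomputable def Matroid.rnk (M : Matroid α) (X : Set α) : ℕ :=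
  sSup (Set.ncard '' {I | M.Indep I ∧ I ⊆ X})

/-- The connectivity function λ(X) = r(X) + r(E − X) − r(M). -/
noncomputable def Matroid.lam (M : Matroid α) (X : Set α) : ℤ :=
  (M.rnk X : ℤ) + (M.rnk (M.E \ X) : ℤ) - (M.rnk M.E : ℤ)

/-- A circuit: a minimal dependent set. -/
def Matroid.IsMinDepCircuit (M : Matroid α) (C : Set α) : Prop :=
  M.Dep C ∧ ∀ D : Set α, D ⊂ C → M.Indep D

/-- A cycle of a (binary) matroid: a disjoint union of circuits. -/
def Matroid.IsCycle (M : Matroid α) (C : Set α) : Prop :=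
  ∃ S : Set (Set α), (∀ c ∈ S, M.IsMinDepCircuit c) ∧ S.PairwiseDisjoint id ∧ C = ⋃₀ S

/-- `M` is representable over the field `𝔽`. -/
def Matroid.IsRepBy (M : Matroid α) (𝔽 : Type) [Field 𝔽] : Prop :=
  ∃ (n : ℕ) (φ : α → (Fin n → 𝔽)), ∀ I : Set α,
    M.Indep I ↔ I ⊆ M.E ∧ LinearIndependent 𝔽 (fun x : I => φ x)

/-- A regular matroid: one representable over every field. -/
def Matroid.IsRegular (M : Matroid α) : Prop :=
  ∀ (𝔽 : Type) [Field 𝔽], M.IsRepBy 𝔽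

/-- A binary matroid: one representable over GF(2). -/
def Matroid.IsBinary (M : Matroid α) : Prop := M.IsRepBy (ZMod 2)

/-- A regular element: one whose deletion and contraction are both regular. -/
def Matroid.IsRegularElem (M : Matroid α) (e : α) : Prop :=
  (M.del {e}).IsRegular ∧ (M.con {e}).IsRegular

/-- An exact j-separation `(X₁, X₂)` of `M`. -/
def Matroid.ExactSep (M : Matroid α) (j : ℕ) (X₁ X₂ : Set α) : Prop :=
  Disjoint X₁ X₂ ∧ X₁ ∪ X₂ = M.E ∧ (j : ℤ) ≤ X₁.ncard ∧ (j : ℤ) ≤ X₂.ncard ∧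
    M.lam X₁ = (j : ℤ) - 1

/-- A j-separation `(X₁, X₂)` of `M`. -/
def Matroid.IsSep (M : Matroid α) (j : ℕ) (X₁ X₂ : Set α) : Prop :=
  Disjoint X₁ X₂ ∧ X₁ ∪ X₂ = M.E ∧ (j : ℤ) ≤ X₁.ncard ∧ (j : ℤ) ≤ X₂.ncard ∧
    M.lam X₁ ≤ (j : ℤ) - 1

/-- A k-connected matroid: no j-separation for j ≤ k − 1. -/
def Matroid.KConnected (M : Matroid α) (k : ℕ) : Prop :=
  ∀ j : ℕ, 1 ≤ j → j ≤ k - 1 → ∀ X₁ X₂ : Set α, ¬ M.IsSep j X₁ X₂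

/-- Matroid isomorphism: a bijection of ground sets preserving independence. -/
def Matroid.MIso (M : Matroid α) (N : Matroid β) : Prop :=
  ∃ e : ↥M.E ≃ ↥N.E, ∀ I : Set ↥M.E,
    M.Indep (Subtype.val '' I) ↔ N.Indep (Subtype.val '' (e '' I))

/-- The columns of the matrix `[I₄ | D]` over GF(2) representing AG(3,2). -/
def agCols : Fin 8 → Fin 4 → ZMod 2 :=
  ![![1,0,0,0], ![0,1,0,0], ![0,0,1,0], ![0,0,0,1],
    ![0,1,1,1], ![1,0,1,1], ![1,1,0,1], ![1,1,1,0]]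

set_option maxRecDepth 40000

namespace AGaux

variable {𝔽 : Type} [Field 𝔽] {V : Type*} [AddCommGroup V] [Module 𝔽 V]

lemma con_ground (M : Matroid α) (C : Set α) : (M.con C).E = M.E \ C := rfl

lemma con_indep_iff (M : Matroid α) {e : α} (he : M.Indep {e}) (I : Set α) :
    (M.con {e}).Indep I ↔ e ∉ I ∧ M.Indep (insert e I) := by
  constructor
  · intro h
    obtain ⟨hIE, B, hB, hdisj⟩ := (Matroid.dual_indep_iff_exists' (M := M✶.del {e})).1 h
    rw [Matroid.del, Matroid.restrict_ground_eq] at hIE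
    rw [Matroid.del, Matroid.isBase_restrict_iff'] at hB
    rw [Matroid.isBasis'_iff_isBasis (diff_subset)] at hB
    -- B is a basis of M✶.E \ {e} in M✶; show it is a base of M✶
    obtain ⟨B₁, hB₁, heB₁⟩ := he.exists_isBase_superset
    have hB₁d : M✶.IsBase (M.E \ B₁) := hB₁.compl_isBase_dual
    have hsub : M.E \ B₁ ⊆ M✶.E \ {e} := by
      rw [Matroid.dual_ground]
      exact diff_subset_diff_right (singleton_subset_iff.2 (heB₁ rfl))
    have hBbase : M✶.IsBase B := hB.isBase_of_isBase_subset hB₁d hsub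
    have hBc : M.IsBase (M.E \ B) := hBbase.compl_isBase_of_dual
    have heI : e ∉ I := fun hin => (hIE hin).2 rfl
    refine ⟨heI, hBc.indep.subset ?_⟩
    rw [insert_subset_iff]
    constructor
    · exact ⟨he.subset_ground rfl, fun hc => (hB.subset hc).2 rfl⟩
    · intro x hx
      exact ⟨(hIE hx).1, fun hc => hdisj.ne_of_mem hx hc rfl⟩
  · rintro ⟨heI, hind⟩
    obtain ⟨B₁, hB₁, hsub⟩ := hind.exists_isBase_superset
    show (M✶.del {e})✶.Indep I
    rw [Matroid.dual_indep_iff_exists']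
    refine ⟨?_, M.E \ B₁, ?_, ?_⟩
    · rw [Matroid.del, Matroid.restrict_ground_eq, Matroid.dual_ground]
      intro x hx
      exact ⟨hind.subset_ground (Or.inr hx), fun hc => heI (hc ▸ hx)⟩
    · rw [Matroid.del, Matroid.isBase_restrict_iff', Matroid.isBasis'_iff_isBasis (diff_subset)]
      refine hB₁.compl_isBase_dual.isBasis_of_subset ?_ ?_
      · exact diff_subset
      · exact diff_subset_diff_right (singleton_subset_iff.2 (hsub (Or.inl rfl)))
    · exact Set.disjoint_left.2 fun x hx hx' => hx'.2 (hsub (Or.inr hx))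

lemma li_range_iff {k : ℕ} (φ : α → V) (f : Fin k → α) (hf : Function.Injective f) :
    LinearIndependent 𝔽 (fun x : (Set.range f) => φ x) ↔
      LinearIndependent 𝔽 (fun i => φ (f i)) := by
  refine (linearIndependent_equiv' (Equiv.ofInjective f hf)
    (f := fun x : (Set.range f) => φ x) ?_).symm
  funext i
  simp [Equiv.ofInjective]

lemma range_vec3 (a b c : α) : ({a,b,c} : Set α) = Set.range ![a,b,c] := by
  simp [Matrix.range_cons, Matrix.range_empty]
  ext x; simp; tauto

lemma range_vec4 (a b c d : α) : ({a,b,c,d} : Set α) = Set.range ![a,b,c,d] := by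
  simp [Matrix.range_cons, Matrix.range_empty]
  ext x; simp; tauto

lemma range_vec5 (a b c d e : α) : ({a,b,c,d,e} : Set α) = Set.range ![a,b,c,d,e] := by
  simp [Matrix.range_cons, Matrix.range_empty]
  ext x; simp; tauto

lemma li3_coeff {f : Fin 3 → V} (h : LinearIndependent 𝔽 f) :
    ∀ x y z : 𝔽, x • f 0 + y • f 1 + z • f 2 = 0 → x = 0 ∧ y = 0 ∧ z = 0 := by
  rw [Fintype.linearIndependent_iff] at h
  intro x y z hs
  have := h ![x,y,z] (by simpa [Fin.sum_univ_three] using hs)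
  exact ⟨this 0, this 1, this 2⟩

lemma dep3_coeff {f : Fin 3 → V} (h : ¬ LinearIndependent 𝔽 f) :
    ∃ x y z : 𝔽, x • f 0 + y • f 1 + z • f 2 = 0 ∧ ¬ (x = 0 ∧ y = 0 ∧ z = 0) := by
  rw [Fintype.linearIndependent_iff] at h
  push_neg at h
  obtain ⟨g, hg, i, hi⟩ := h
  refine ⟨g 0, g 1, g 2, by simpa [Fin.sum_univ_three] using hg, ?_⟩
  rintro ⟨h0, h1, h2⟩
  fin_cases i <;> simp_all

lemma dep4_coeff {f : Fin 4 → V} (h : ¬ LinearIndependent 𝔽 f) :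
    ∃ x y z t : 𝔽, x • f 0 + y • f 1 + z • f 2 + t • f 3 = 0 ∧
      ¬ (x = 0 ∧ y = 0 ∧ z = 0 ∧ t = 0) := by
  rw [Fintype.linearIndependent_iff] at h
  push_neg at h
  obtain ⟨g, hg, i, hi⟩ := h
  refine ⟨g 0, g 1, g 2, g 3, by simpa [Fin.sum_univ_four] using hg, ?_⟩
  rintro ⟨h0, h1, h2, h3⟩
  fin_cases i <;> simp_all


section Core
variable {V : Type*} [AddCommGroup V] [Module ℚ V]

lemma fano_core (w1 w2 w3 w4 w5 w6 w7 : V)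
    (I123 : ∀ x y z : ℚ, x•w1+y•w2+z•w3 = 0 → x = 0 ∧ y = 0 ∧ z = 0)
    (I237 : ∀ x y z : ℚ, x•w2+y•w3+z•w7 = 0 → x = 0 ∧ y = 0 ∧ z = 0)
    (I137 : ∀ x y z : ℚ, x•w1+y•w3+z•w7 = 0 → x = 0 ∧ y = 0 ∧ z = 0)
    (I135 : ∀ x y z : ℚ, x•w1+y•w3+z•w5 = 0 → x = 0 ∧ y = 0 ∧ z = 0)
    (I125 : ∀ x y z : ℚ, x•w1+y•w2+z•w5 = 0 → x = 0 ∧ y = 0 ∧ z = 0)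
    (I236 : ∀ x y z : ℚ, x•w2+y•w3+z•w6 = 0 → x = 0 ∧ y = 0 ∧ z = 0)
    (I126 : ∀ x y z : ℚ, x•w1+y•w2+z•w6 = 0 → x = 0 ∧ y = 0 ∧ z = 0)
    (I234 : ∀ x y z : ℚ, x•w2+y•w3+z•w4 = 0 → x = 0 ∧ y = 0 ∧ z = 0)
    (I134 : ∀ x y z : ℚ, x•w1+y•w3+z•w4 = 0 → x = 0 ∧ y = 0 ∧ z = 0)
    (I124 : ∀ x y z : ℚ, x•w1+y•w2+z•w4 = 0 → x = 0 ∧ y = 0 ∧ z = 0)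
    (D127 : ∃ x y z : ℚ, x•w1+y•w2+z•w7 = 0 ∧ ¬(x = 0 ∧ y = 0 ∧ z = 0))
    (D136 : ∃ x y z : ℚ, x•w1+y•w3+z•w6 = 0 ∧ ¬(x = 0 ∧ y = 0 ∧ z = 0))
    (D235 : ∃ x y z : ℚ, x•w2+y•w3+z•w5 = 0 ∧ ¬(x = 0 ∧ y = 0 ∧ z = 0))
    (D145 : ∃ x y z : ℚ, x•w1+y•w4+z•w5 = 0 ∧ ¬(x = 0 ∧ y = 0 ∧ z = 0))
    (D246 : ∃ x y z : ℚ, x•w2+y•w4+z•w6 = 0 ∧ ¬(x = 0 ∧ y = 0 ∧ z = 0))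
    (D347 : ∃ x y z : ℚ, x•w3+y•w4+z•w7 = 0 ∧ ¬(x = 0 ∧ y = 0 ∧ z = 0))
    (D567 : ∃ x y z : ℚ, x•w5+y•w6+z•w7 = 0 ∧ ¬(x = 0 ∧ y = 0 ∧ z = 0))
    (Q4 : ∃ x y z t : ℚ, x•w1+y•w2+z•w3+t•w4 = 0 ∧ ¬(x = 0 ∧ y = 0 ∧ z = 0 ∧ t = 0)) :
    False := by
  -- a helper to solve for a vector
  have solve : ∀ (u : V) (x y z t : ℚ), t ≠ 0 → x•w1+y•w2+z•w3+t•u = 0 →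
      u = (-x/t)•w1+(-y/t)•w2+(-z/t)•w3 := by
    intro u x y z t ht hsum
    have h2 : u = t⁻¹ • (t • u) := by rw [smul_smul, inv_mul_cancel₀ ht, one_smul]
    have h3 : t • u = (-x)•w1+(-y)•w2+(-z)•w3 := by
      have h4 : t•u = (x•w1+y•w2+z•w3+t•u) - (x•w1+y•w2+z•w3) := by module
      rw [h4, hsum]
      module
    rw [h2, h3]
    module
  -- coordinates for w4
  obtain ⟨x4, y4, z4, h4⟩ : ∃ X Y Z : ℚ, w4 = X•w1+Y•w2+Z•w3 := by
    obtain ⟨x, y, z, t, hsum, hnz⟩ := Q4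
    have ht : t ≠ 0 := by
      intro h0
      rw [h0] at hsum
      obtain ⟨hx, hy, hz⟩ := I123 x y z (by
        have e : x•w1+y•w2+z•w3 = x•w1+y•w2+z•w3+(0:ℚ)•w4 := by module
        rw [e]; exact hsum)
      exact hnz ⟨hx, hy, hz, h0⟩
    exact ⟨_, _, _, solve w4 x y z t ht hsum⟩
  -- coordinates for w7 (z-coordinate 0)
  obtain ⟨x7, y7, z7, h7, hz7⟩ : ∃ X Y Z : ℚ, w7 = X•w1+Y•w2+Z•w3 ∧ Z = 0 := by
    obtain ⟨x, y, z, hsum, hnz⟩ := D127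
    have hz : z ≠ 0 := by
      intro h0
      rw [h0] at hsum
      obtain ⟨hx, hy, -⟩ := I123 x y 0 (by
        have e : x•w1+y•w2+(0:ℚ)•w3 = x•w1+y•w2+(0:ℚ)•w7 := by module
        rw [e]; exact hsum)
      exact hnz ⟨hx, hy, h0⟩
    refine ⟨-x/z, -y/z, -0/z, solve w7 x y 0 z hz ?_, by norm_num⟩
    have e : x•w1+y•w2+(0:ℚ)•w3+z•w7 = x•w1+y•w2+z•w7 := by module
    rw [e]; exact hsum
  -- coordinates for w5 (x-coordinate 0)
  obtain ⟨x5, y5, z5, h5, hx5⟩ : ∃ X Y Z : ℚ, w5 = X•w1+Y•w2+Z•w3 ∧ X = 0 := by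
    obtain ⟨x, y, z, hsum, hnz⟩ := D235
    have hz : z ≠ 0 := by
      intro h0
      rw [h0] at hsum
      obtain ⟨-, hx, hy⟩ := I123 0 x y (by
        have e : (0:ℚ)•w1+x•w2+y•w3 = x•w2+y•w3+(0:ℚ)•w5 := by module
        rw [e]; exact hsum)
      exact hnz ⟨hx, hy, h0⟩
    refine ⟨-0/z, -x/z, -y/z, solve w5 0 x y z hz ?_, by norm_num⟩
    have e : (0:ℚ)•w1+x•w2+y•w3+z•w5 = x•w2+y•w3+z•w5 := by module
    rw [e]; exact hsum
  -- coordinates for w6 (y-coordinate 0)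
  obtain ⟨x6, y6, z6, h6, hy6⟩ : ∃ X Y Z : ℚ, w6 = X•w1+Y•w2+Z•w3 ∧ Y = 0 := by
    obtain ⟨x, y, z, hsum, hnz⟩ := D136
    have hz : z ≠ 0 := by
      intro h0
      rw [h0] at hsum
      obtain ⟨hx, -, hy⟩ := I123 x 0 y (by
        have e : x•w1+(0:ℚ)•w2+y•w3 = x•w1+y•w3+(0:ℚ)•w6 := by module
        rw [e]; exact hsum)
      exact hnz ⟨hx, hy, h0⟩
    refine ⟨-x/z, -0/z, -y/z, solve w6 x 0 y z hz ?_, by norm_num⟩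
    have e : x•w1+(0:ℚ)•w2+y•w3+z•w6 = x•w1+y•w3+z•w6 := by module
    rw [e]; exact hsum
  -- nonzero coordinates
  have hx7 : x7 ≠ 0 := by
    intro h
    have := (I237 y7 z7 (-1) (by rw [h7, h]; module)).2.2
    norm_num at this
  have hy7 : y7 ≠ 0 := by
    intro h
    have := (I137 x7 z7 (-1) (by rw [h7, h]; module)).2.2
    norm_num at this
  have hy5 : y5 ≠ 0 := by
    intro h
    have := (I135 x5 z5 (-1) (by rw [h5, h]; module)).2.2
    norm_num at this
  have hz5 : z5 ≠ 0 := by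
    intro h
    have := (I125 x5 y5 (-1) (by rw [h5, h]; module)).2.2
    norm_num at this
  have hx6 : x6 ≠ 0 := by
    intro h
    have := (I236 y6 z6 (-1) (by rw [h6, h]; module)).2.2
    norm_num at this
  have hz6 : z6 ≠ 0 := by
    intro h
    have := (I126 x6 y6 (-1) (by rw [h6, h]; module)).2.2
    norm_num at this
  have hx4 : x4 ≠ 0 := by
    intro h
    have := (I234 y4 z4 (-1) (by rw [h4, h]; module)).2.2
    norm_num at this
  have hy4 : y4 ≠ 0 := by
    intro h
    have := (I134 x4 z4 (-1) (by rw [h4, h]; module)).2.2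
    norm_num at this
  have hz4 : z4 ≠ 0 := by
    intro h
    have := (I124 x4 y4 (-1) (by rw [h4, h]; module)).2.2
    norm_num at this
  -- relation from line {1,4,5} : y4*z5 = z4*y5
  have r145 : y4*z5 = z4*y5 := by
    obtain ⟨a, b, g, hsum, hnz⟩ := D145
    have hb : b ≠ 0 := by
      intro h0
      rw [h0] at hsum
      obtain ⟨e1, e2, e3⟩ := I123 (a+g*x5) (g*y5) (g*z5) (by
        have e : (a+g*x5)•w1+(g*y5)•w2+(g*z5)•w3
            = a•w1+(0:ℚ)•w4+g•(x5•w1+y5•w2+z5•w3) := by module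
        rw [e, ← h5]; exact hsum)
      have hg0 : g = 0 := (mul_eq_zero.mp e2).resolve_right hy5
      rw [hg0] at e1
      exact hnz ⟨by linarith, h0, hg0⟩
    have hg : g ≠ 0 := by
      intro h0
      rw [h0] at hsum
      obtain ⟨e1, e2, e3⟩ := I123 (a+b*x4) (b*y4) (b*z4) (by
        have e : (a+b*x4)•w1+(b*y4)•w2+(b*z4)•w3
            = a•w1+b•(x4•w1+y4•w2+z4•w3)+(0:ℚ)•w5 := by module
        rw [e, ← h4]; exact hsum)
      have hb0 : b = 0 := (mul_eq_zero.mp e2).resolve_right hy4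
      rw [hb0] at e1
      exact hnz ⟨by linarith, hb0, h0⟩
    obtain ⟨e1, e2, e3⟩ := I123 (a+b*x4+g*x5) (b*y4+g*y5) (b*z4+g*z5) (by
      have e : (a+b*x4+g*x5)•w1+(b*y4+g*y5)•w2+(b*z4+g*z5)•w3
          = a•w1+b•(x4•w1+y4•w2+z4•w3)+g•(x5•w1+y5•w2+z5•w3) := by module
      rw [e, ← h4, ← h5]; exact hsum)
    exact mul_left_cancel₀ hb (by linear_combination z5*e2 - y5*e3)
  -- relation from line {2,4,6} : x4*z6 = z4*x6
  have r246 : x4*z6 = z4*x6 := by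
    obtain ⟨a, b, g, hsum, hnz⟩ := D246
    have hb : b ≠ 0 := by
      intro h0
      rw [h0] at hsum
      obtain ⟨e1, e2, e3⟩ := I123 (g*x6) (a+g*y6) (g*z6) (by
        have e : (g*x6)•w1+(a+g*y6)•w2+(g*z6)•w3
            = a•w2+(0:ℚ)•w4+g•(x6•w1+y6•w2+z6•w3) := by module
        rw [e, ← h6]; exact hsum)
      have hg0 : g = 0 := (mul_eq_zero.mp e1).resolve_right hx6
      rw [hg0] at e2
      exact hnz ⟨by linarith, h0, hg0⟩
    have hg : g ≠ 0 := by
      intro h0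
      rw [h0] at hsum
      obtain ⟨e1, e2, e3⟩ := I123 (b*x4) (a+b*y4) (b*z4) (by
        have e : (b*x4)•w1+(a+b*y4)•w2+(b*z4)•w3
            = a•w2+b•(x4•w1+y4•w2+z4•w3)+(0:ℚ)•w6 := by module
        rw [e, ← h4]; exact hsum)
      have hb0 : b = 0 := (mul_eq_zero.mp e1).resolve_right hx4
      rw [hb0] at e2
      exact hnz ⟨by linarith, hb0, h0⟩
    obtain ⟨e1, e2, e3⟩ := I123 (b*x4+g*x6) (a+b*y4+g*y6) (b*z4+g*z6) (by
      have e : (b*x4+g*x6)•w1+(a+b*y4+g*y6)•w2+(b*z4+g*z6)•w3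
          = a•w2+b•(x4•w1+y4•w2+z4•w3)+g•(x6•w1+y6•w2+z6•w3) := by module
      rw [e, ← h4, ← h6]; exact hsum)
    exact mul_left_cancel₀ hb (by linear_combination z6*e1 - x6*e3)
  -- relation from line {3,4,7} : x4*y7 = y4*x7
  have r347 : x4*y7 = y4*x7 := by
    obtain ⟨a, b, g, hsum, hnz⟩ := D347
    have hb : b ≠ 0 := by
      intro h0
      rw [h0] at hsum
      obtain ⟨e1, e2, e3⟩ := I123 (g*x7) (g*y7) (a+g*z7) (by
        have e : (g*x7)•w1+(g*y7)•w2+(a+g*z7)•w3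
            = a•w3+(0:ℚ)•w4+g•(x7•w1+y7•w2+z7•w3) := by module
        rw [e, ← h7]; exact hsum)
      have hg0 : g = 0 := (mul_eq_zero.mp e1).resolve_right hx7
      rw [hg0] at e3
      exact hnz ⟨by linarith, h0, hg0⟩
    have hg : g ≠ 0 := by
      intro h0
      rw [h0] at hsum
      obtain ⟨e1, e2, e3⟩ := I123 (b*x4) (b*y4) (a+b*z4) (by
        have e : (b*x4)•w1+(b*y4)•w2+(a+b*z4)•w3
            = a•w3+b•(x4•w1+y4•w2+z4•w3)+(0:ℚ)•w7 := by module
        rw [e, ← h4]; exact hsum)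
      have hb0 : b = 0 := (mul_eq_zero.mp e1).resolve_right hx4
      rw [hb0] at e3
      exact hnz ⟨by linarith, hb0, h0⟩
    obtain ⟨e1, e2, e3⟩ := I123 (b*x4+g*x7) (b*y4+g*y7) (a+b*z4+g*z7) (by
      have e : (b*x4+g*x7)•w1+(b*y4+g*y7)•w2+(a+b*z4+g*z7)•w3
          = a•w3+b•(x4•w1+y4•w2+z4•w3)+g•(x7•w1+y7•w2+z7•w3) := by module
      rw [e, ← h4, ← h7]; exact hsum)
    exact mul_left_cancel₀ hb (by linear_combination y7*e1 - x7*e2)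
  -- relation from line {5,6,7}
  have r567 : y5*z6*x7 + y7*z5*x6 = 0 := by
    obtain ⟨a, b, g, hsum, hnz⟩ := D567
    have hcoord : ∀ p q r : ℚ, p•w5+q•w6+r•w7 = 0 →
        (p*x5+q*x6+r*x7 = 0 ∧ p*y5+q*y6+r*y7 = 0 ∧ p*z5+q*z6+r*z7 = 0) := by
      intro p q r hpqr
      exact I123 _ _ _ (by
        have e : (p*x5+q*x6+r*x7)•w1+(p*y5+q*y6+r*y7)•w2+(p*z5+q*z6+r*z7)•w3
            = p•(x5•w1+y5•w2+z5•w3)+q•(x6•w1+y6•w2+z6•w3)+r•(x7•w1+y7•w2+z7•w3) := by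
          module
        rw [e, ← h5, ← h6, ← h7]; exact hpqr)
    obtain ⟨F1, F2, F3⟩ := hcoord a b g hsum
    rw [hx5] at F1; rw [hy6] at F2; rw [hz7] at F3
    have ha : a ≠ 0 := by
      intro h0
      rw [h0] at F1 F2 F3
      have hg0 : g = 0 := by
        have : g*y7 = 0 := by linarith
        exact (mul_eq_zero.mp this).resolve_right hy7
      rw [hg0] at F1
      have hb0 : b = 0 := by
        have : b*x6 = 0 := by linarith
        exact (mul_eq_zero.mp this).resolve_right hx6
      exact hnz ⟨h0, hb0, hg0⟩
    have hb : b ≠ 0 := by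
      intro h0
      rw [h0] at F1 F2 F3
      have ha0 : a = 0 := by
        have : a*z5 = 0 := by linarith
        exact (mul_eq_zero.mp this).resolve_right hz5
      rw [ha0] at F1
      have hg0 : g = 0 := by
        have : g*x7 = 0 := by linarith
        exact (mul_eq_zero.mp this).resolve_right hx7
      exact hnz ⟨ha0, h0, hg0⟩
    have hg : g ≠ 0 := by
      intro h0
      rw [h0] at F1 F2 F3
      have hb0 : b = 0 := by
        have : b*x6 = 0 := by linarith
        exact (mul_eq_zero.mp this).resolve_right hx6
      rw [hb0] at F3
      have ha0 : a = 0 := by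
        have : a*z5 = 0 := by linarith
        exact (mul_eq_zero.mp this).resolve_right hz5
      exact hnz ⟨ha0, hb0, h0⟩
    have e1 : a*y5 = -(g*y7) := by linarith
    have e2 : b*z6 = -(a*z5) := by linarith
    have e3 : g*x7 = -(b*x6) := by linarith
    have m : (a*y5)*((b*z6)*(g*x7)) = (-(g*y7))*((-(a*z5))*(-(b*x6))) := by
      rw [e1, e2, e3]
    have m2 : (a*b*g)*(y5*z6*x7 + y7*z5*x6) = 0 := by linear_combination m
    rcases mul_eq_zero.mp m2 with h | h
    · exact absurd h (mul_ne_zero (mul_ne_zero ha hb) hg)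
    · exact h
  -- final contradiction
  have final : (2:ℚ)*(z4*y4*y5*x6*x7) = 0 := by
    linear_combination (x4*y4)*r567 - (y4*y5*x7)*r246 - (x6*x4*y7)*r145 - (z4*y5*x6)*r347
  have : z4*y4*y5*x6*x7 = 0 := by linarith
  exact (mul_ne_zero (mul_ne_zero (mul_ne_zero (mul_ne_zero hz4 hy4) hy5) hx6) hx7) this

end Core

abbrev P (k : ℕ) (f : Fin k → Fin 8) : Prop :=
  ∀ g : Fin k → ZMod 2, ∑ i, g i • agCols (f i) = 0 → ∀ i, g i = 0

lemma middle (M : Matroid (Fin 8)) (hE : M.E = Set.univ)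
    (hrep : ∀ I : Set (Fin 8),
      M.Indep I ↔ LinearIndependent (ZMod 2) (fun x : I => agCols x))
    (e : Fin 8) (q : Fin 8 → Fin 8) (hq0 : q 0 = e) (hq : Function.Injective q)
    (hT : ∀ x ∈ ([(1,2,3),(2,3,7),(1,3,7),(1,3,5),(1,2,5),(2,3,6),(1,2,6),(2,3,4),
        (1,3,4),(1,2,4)] : List (Fin 8 × Fin 8 × Fin 8)),
      P 4 ![q 0, q x.1, q x.2.1, q x.2.2])
    (hL : ∀ x ∈ ([(1,2,7),(1,3,6),(2,3,5),(1,4,5),(2,4,6),(3,4,7),(5,6,7)] :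
        List (Fin 8 × Fin 8 × Fin 8)),
      ¬ P 4 ![q 0, q x.1, q x.2.1, q x.2.2])
    (hQ4 : ¬ P 5 ![q 0, q 1, q 2, q 3, q 4])
    (hreg : (M.con {e}).IsRegular) : False := by
  subst hq0
  -- basic injectivity helpers
  have comp4 : ∀ a b c d : Fin 8, (fun i => q (![a,b,c,d] i)) = ![q a, q b, q c, q d] := by
    intro a b c d; funext i; fin_cases i <;> rfl
  have comp5 : ∀ a b c d e : Fin 8,
      (fun i => q (![a,b,c,d,e] i)) = ![q a, q b, q c, q d, q e] := by
    intro a b c d e; funext i; fin_cases i <;> rfl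
  have comp3 : ∀ (W : Type) (ψ : Fin 8 → W) (a b c : Fin 8),
      (fun i => ψ (![a,b,c] i)) = ![ψ a, ψ b, ψ c] := by
    intro W ψ a b c; funext i; fin_cases i <;> rfl
  -- M-side criterion
  have hMP : ∀ (k : ℕ) (f : Fin k → Fin 8), Function.Injective f →
      (M.Indep (Set.range f) ↔ P k f) := by
    intro k f hf
    rw [hrep, li_range_iff agCols f hf, Fintype.linearIndependent_iff]
  -- e = q 0 is independent
  have hMe : M.Indep {q 0} := by
    have h := (hMP 4 ![q 0, q 1, q 2, q 3]
      (by rw [← comp4]; exact hq.comp (by decide))).mpr (hT (1,2,3) (by decide))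
    rw [← range_vec4] at h
    exact h.subset (by intro x hx; simp at hx; simp [hx])
  -- key equivalences at matroid level
  have key3 : ∀ i j k : Fin 8, Function.Injective ![(0:Fin 8),i,j,k] →
      ((M.con {q 0}).Indep {q i, q j, q k} ↔ P 4 ![q 0, q i, q j, q k]) := by
    intro i j k hinj
    have hne : ∀ a b : Fin 4, a ≠ b → ![(0:Fin 8),i,j,k] a ≠ ![(0:Fin 8),i,j,k] b :=
      fun a b hab hh => hab (hinj hh)
    have hi : i ≠ 0 := by simpa using hne 1 0 (by decide)
    have hj : j ≠ 0 := by simpa using hne 2 0 (by decide)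
    have hk : k ≠ 0 := by simpa using hne 3 0 (by decide)
    have hinj' : Function.Injective ![q 0, q i, q j, q k] := by
      rw [← comp4]; exact hq.comp hinj
    rw [con_indep_iff M hMe,
      show insert (q 0) {q i, q j, q k} = Set.range ![q 0, q i, q j, q k] from
        range_vec4 _ _ _ _, hMP 4 _ hinj']
    constructor
    · rintro ⟨-, h⟩; exact h
    · intro h
      refine ⟨?_, h⟩
      intro hmem
      simp only [Set.mem_insert_iff, Set.mem_singleton_iff] at hmem
      rcases hmem with h' | h' | h'
      · exact hi (hq h'.symm)
      · exact hj (hq h'.symm)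
      · exact hk (hq h'.symm)
  have key4 : ((M.con {q 0}).Indep {q 1, q 2, q 3, q 4} ↔ P 5 ![q 0, q 1, q 2, q 3, q 4]) := by
    have hinj' : Function.Injective ![q 0, q 1, q 2, q 3, q 4] := by
      rw [← comp5]; exact hq.comp (by decide)
    rw [con_indep_iff M hMe,
      show insert (q 0) {q 1, q 2, q 3, q 4} = Set.range ![q 0, q 1, q 2, q 3, q 4] from
        range_vec5 _ _ _ _ _, hMP 5 _ hinj']
    constructor
    · rintro ⟨-, h⟩; exact h
    · intro h
      refine ⟨?_, h⟩
      intro hmem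
      simp only [Set.mem_insert_iff, Set.mem_singleton_iff] at hmem
      rcases hmem with h' | h' | h' | h' <;>
        exact absurd (hq h'.symm) (by decide)
  -- the rational representation
  obtain ⟨n, ψ, hψ⟩ := hreg ℚ
  have hNE : (M.con {q 0}).E = Set.univ \ {q 0} := by
    rw [con_ground, hE]
  -- ℚ-side equivalences
  have qkey3 : ∀ i j k : Fin 8, Function.Injective ![(0:Fin 8),i,j,k] →
      ((M.con {q 0}).Indep {q i, q j, q k} ↔
        LinearIndependent ℚ ![ψ (q i), ψ (q j), ψ (q k)]) := by
    intro i j k hinj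
    have hne : ∀ a b : Fin 4, a ≠ b → ![(0:Fin 8),i,j,k] a ≠ ![(0:Fin 8),i,j,k] b :=
      fun a b hab hh => hab (hinj hh)
    have hi : i ≠ 0 := by simpa using hne 1 0 (by decide)
    have hj : j ≠ 0 := by simpa using hne 2 0 (by decide)
    have hk : k ≠ 0 := by simpa using hne 3 0 (by decide)
    have htail : Function.Injective ![i,j,k] := by
      intro a b hab
      have h2 : ![(0:Fin 8),i,j,k] a.succ = ![(0:Fin 8),i,j,k] b.succ := by
        have e1 : ∀ c : Fin 3, ![(0:Fin 8),i,j,k] c.succ = ![i,j,k] c := by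
          intro c; fin_cases c <;> rfl
        rw [e1, e1, hab]
      exact Fin.succ_injective _ (hinj h2)
    have hinj3 : Function.Injective ![q i, q j, q k] := by
      rw [← comp3]; exact hq.comp htail
    rw [hψ, show ({q i, q j, q k} : Set (Fin 8)) = Set.range ![q i, q j, q k] from
      range_vec3 _ _ _, li_range_iff ψ _ hinj3, comp3]
    constructor
    · rintro ⟨-, h⟩; exact h
    · intro h
      refine ⟨?_, h⟩
      rw [← range_vec3, hNE]
      intro x hx
      simp only [Set.mem_insert_iff, Set.mem_singleton_iff] at hx
      refine ⟨trivial, ?_⟩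
      rcases hx with rfl | rfl | rfl
      · simp only [Set.mem_singleton_iff]; exact fun h' => hi (hq h')
      · simp only [Set.mem_singleton_iff]; exact fun h' => hj (hq h')
      · simp only [Set.mem_singleton_iff]; exact fun h' => hk (hq h')
  -- extraction of coefficient facts
  have getI : ∀ i j k : Fin 8, Function.Injective ![(0:Fin 8),i,j,k] →
      P 4 ![q 0, q i, q j, q k] →
      ∀ x y z : ℚ, x • ψ (q i) + y • ψ (q j) + z • ψ (q k) = 0 →
        x = 0 ∧ y = 0 ∧ z = 0 := by
    intro i j k hinj hp x y z hxyz
    have hLI := (qkey3 i j k hinj).mp ((key3 i j k hinj).mpr hp)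
    exact li3_coeff hLI x y z (by simpa using hxyz)
  have getD : ∀ i j k : Fin 8, Function.Injective ![(0:Fin 8),i,j,k] →
      ¬ P 4 ![q 0, q i, q j, q k] →
      ∃ x y z : ℚ, x • ψ (q i) + y • ψ (q j) + z • ψ (q k) = 0 ∧
        ¬ (x = 0 ∧ y = 0 ∧ z = 0) := by
    intro i j k hinj hp
    have hnLI : ¬ LinearIndependent ℚ ![ψ (q i), ψ (q j), ψ (q k)] :=
      fun h => hp ((key3 i j k hinj).mp ((qkey3 i j k hinj).mpr h))
    obtain ⟨x, y, z, h1, h2⟩ := dep3_coeff hnLI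
    exact ⟨x, y, z, by simpa using h1, h2⟩
  -- the quad fact
  have getQ : ∃ x y z t : ℚ,
      x • ψ (q 1) + y • ψ (q 2) + z • ψ (q 3) + t • ψ (q 4) = 0 ∧
      ¬ (x = 0 ∧ y = 0 ∧ z = 0 ∧ t = 0) := by
    have hN : ¬ (M.con {q 0}).Indep {q 1, q 2, q 3, q 4} := fun h => hQ4 (key4.mp h)
    have hinj4 : Function.Injective ![q 1, q 2, q 3, q 4] := by
      rw [← comp4]; exact hq.comp (by decide)
    have hnLI : ¬ LinearIndependent ℚ ![ψ (q 1), ψ (q 2), ψ (q 3), ψ (q 4)] := by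
      intro h
      apply hN
      rw [hψ, show ({q 1, q 2, q 3, q 4} : Set (Fin 8)) =
        Set.range ![q 1, q 2, q 3, q 4] from range_vec4 _ _ _ _,
        li_range_iff ψ _ hinj4]
      constructor
      · rw [← range_vec4, hNE]
        intro x hx
        simp only [Set.mem_insert_iff, Set.mem_singleton_iff] at hx
        refine ⟨trivial, ?_⟩
        simp only [Set.mem_singleton_iff]
        rcases hx with rfl | rfl | rfl | rfl <;> exact fun h' => absurd (hq h') (by decide)
      · have e2 : ∀ (W : Type) (ψ' : Fin 8 → W) (a b c d : Fin 8),
            (fun i => ψ' (![a,b,c,d] i)) = ![ψ' a, ψ' b, ψ' c, ψ' d] := by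
          intro W ψ' a b c d; funext i; fin_cases i <;> rfl
        rw [e2]; exact h
    obtain ⟨x, y, z, t, h1, h2⟩ := dep4_coeff hnLI
    exact ⟨x, y, z, t, by simpa using h1, h2⟩
  exact fano_core (ψ (q 1)) (ψ (q 2)) (ψ (q 3)) (ψ (q 4)) (ψ (q 5)) (ψ (q 6)) (ψ (q 7))
    (getI 1 2 3 (by decide) (hT (1,2,3) (by decide)))
    (getI 2 3 7 (by decide) (hT (2,3,7) (by decide)))
    (getI 1 3 7 (by decide) (hT (1,3,7) (by decide)))
    (getI 1 3 5 (by decide) (hT (1,3,5) (by decide)))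
    (getI 1 2 5 (by decide) (hT (1,2,5) (by decide)))
    (getI 2 3 6 (by decide) (hT (2,3,6) (by decide)))
    (getI 1 2 6 (by decide) (hT (1,2,6) (by decide)))
    (getI 2 3 4 (by decide) (hT (2,3,4) (by decide)))
    (getI 1 3 4 (by decide) (hT (1,3,4) (by decide)))
    (getI 1 2 4 (by decide) (hT (1,2,4) (by decide)))
    (getD 1 2 7 (by decide) (hL (1,2,7) (by decide)))
    (getD 1 3 6 (by decide) (hL (1,3,6) (by decide)))
    (getD 2 3 5 (by decide) (hL (2,3,5) (by decide)))
    (getD 1 4 5 (by decide) (hL (1,4,5) (by decide)))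
    (getD 2 4 6 (by decide) (hL (2,4,6) (by decide)))
    (getD 3 4 7 (by decide) (hL (3,4,7) (by decide)))
    (getD 5 6 7 (by decide) (hL (5,6,7) (by decide)))
    getQ

end AGaux

set_option maxHeartbeats 4000000 in
/-- AG(3,2) has no regular elements. -/
theorem ag32_no_regular_elements (M : Matroid (Fin 8)) (hE : M.E = Set.univ)
    (hrep : ∀ I : Set (Fin 8),
      M.Indep I ↔ LinearIndependent (ZMod 2) (fun x : I => agCols x)) :
    ∀ e : Fin 8, ¬ M.IsRegularElem e := by
  intro e hre
  obtain ⟨-, hcon⟩ := hre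
  fin_cases e
  · exact AGaux.middle M hE hrep _ ![0,1,2,3,4,5,6,7] (by decide) (by decide) (by decide) (by decide) (by decide) hcon
  · exact AGaux.middle M hE hrep _ ![1,0,7,6,5,4,3,2] (by decide) (by decide) (by decide) (by decide) (by decide) hcon
  · exact AGaux.middle M hE hrep _ ![2,7,0,5,6,3,4,1] (by decide) (by decide) (by decide) (by decide) (by decide) hcon
  · exact AGaux.middle M hE hrep _ ![3,6,5,0,7,2,1,4] (by decide) (by decide) (by decide) (by decide) (by decide) hcon
  · exact AGaux.middle M hE hrep _ ![4,5,6,7,0,1,2,3] (by decide) (by decide) (by decide) (by decide) (by decide) hcon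
  · exact AGaux.middle M hE hrep _ ![5,4,3,2,1,0,7,6] (by decide) (by decide) (by decide) (by decide) (by decide) hcon
  · exact AGaux.middle M hE hrep _ ![6,3,4,1,2,7,0,5] (by decide) (by decide) (by decide) (by decide) (by decide) hcon
  · exact AGaux.middle M hE hrep _ ![7,2,1,4,3,6,5,0] (by decide) (by decide) (by decide) (by decide) (by decide) hcon
end

section
/- The matroid P₉ (the binary single-element extension of the rank-4 wheel M(W₄) where the new element forms a circuit with three consecutive spokes) satisfies: P₉ \ 1 ≅ S₈, P₉ \ 3 ≅ S₈, and P₉ \ {1,3} ≅ F₇*, where 1 and 3 are two of the spokes in the defining circuit. -/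
open Matroid Set

variable {α β : Type*}

/-- The columns of the matrix `[I₄ | D]` over GF(2) representing P₉. -/
def p9Cols : Fin 9 → Fin 4 → ZMod 2 :=
  ![![1,0,0,0], ![0,1,0,0], ![0,0,1,0], ![0,0,0,1],
    ![0,1,1,1], ![1,0,1,1], ![1,1,0,1], ![1,1,1,1], ![1,1,0,0]]

/-- The columns of the matrix `[I₄ | D]` over GF(2) representing S₈. -/
def s8Cols : Fin 8 → Fin 4 → ZMod 2 :=
  ![![1,0,0,0], ![0,1,0,0], ![0,0,1,0], ![0,0,0,1],
    ![0,1,1,1], ![1,0,1,1], ![1,1,0,1], ![1,1,1,1]]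

/-- The columns of the Fano matrix `[I₃ | D]` over GF(2). -/
def fanoCols : Fin 7 → Fin 3 → ZMod 2 :=
  ![![1,0,0], ![0,1,0], ![0,0,1], ![1,1,0], ![0,1,1], ![1,0,1], ![1,1,1]]

/-! ### Auxiliary machinery -/

section Aux

/-- Over `GF(2)`, linear independence of a family indexed by a set is equivalent to the
statement that no nonempty finite subset sums to zero. -/
lemma li_iff_finsets {ι W : Type*} [AddCommGroup W] [Module (ZMod 2) W]
    (v : ι → W) (I : Set ι) :
    LinearIndependent (ZMod 2) (fun x : I => v x) ↔
      ∀ S : Finset ι, ↑S ⊆ I → ∑ i ∈ S, v i = 0 → S = ∅ := by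
  classical
  rw [linearIndependent_iff']
  constructor
  · intro h S hS hsum
    by_contra hne
    obtain ⟨a, ha⟩ := Finset.nonempty_iff_ne_empty.2 hne
    set emb : {x // x ∈ S} ↪ ↥I :=
      ⟨fun x => ⟨x.1, hS x.2⟩, fun x y hxy => by
        apply Subtype.ext
        have h2 := congrArg (fun z : ↥I => z.1) hxy
        simpa using h2⟩ with hemb
    have hsum' : ∑ i ∈ S.attach.map emb, (fun _ : ↥I => (1 : ZMod 2)) i • v i.1 = 0 := by
      rw [Finset.sum_map]
      simp only [one_smul, hemb, Function.Embedding.coeFn_mk]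
      refine (Finset.sum_attach S (fun i => v i)).trans ?_
      exact hsum
    have h1 := h (S.attach.map emb) (fun _ => 1) hsum' ⟨a, hS ha⟩
      (by rw [Finset.mem_map]; exact ⟨⟨a, ha⟩, Finset.mem_attach _ _, rfl⟩)
    exact one_ne_zero h1
  · intro h s g hsum i hi
    by_contra hgi
    set t := s.filter (fun j => g j ≠ 0) with ht
    have h1 : ∑ j ∈ t, g j • v j.1 = ∑ j ∈ s, g j • v j.1 :=
      Finset.sum_filter_of_ne (fun x _ hfx hg0 => hfx (by rw [hg0, zero_smul]))
    have htwo : ∀ x : ZMod 2, x ≠ 0 → x = 1 := by decide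
    have hsum2 : ∑ j ∈ t, v j.1 = 0 := by
      have hco : ∀ j ∈ t, v j.1 = g j • v j.1 := fun j hj => by
        rw [htwo (g j) (Finset.mem_filter.1 hj).2, one_smul]
      rw [Finset.sum_congr rfl hco, h1]
      exact hsum
    set T := t.image (Subtype.val) with hT
    have hTsub : ↑T ⊆ I := by
      intro x hx
      rw [hT, Finset.coe_image] at hx
      obtain ⟨y, -, rfl⟩ := hx
      exact y.2
    have hTsum : ∑ i ∈ T, v i = 0 := by
      rw [hT, Finset.sum_image (fun x _ y _ hxy => Subtype.ext hxy)]
      exact hsum2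
    have hit : i ∈ t := Finset.mem_filter.2 ⟨hi, hgi⟩
    have hiT : i.1 ∈ T := Finset.mem_image_of_mem _ hit
    rw [h T hTsub hTsum] at hiT
    exact absurd hiT (Finset.notMem_empty _)

/-- The decidable independence test for a finite list of GF(2)-columns. -/
abbrev OKcols {n m : ℕ} (v : Fin n → Fin m → ZMod 2) (J : Finset (Fin n)) : Prop :=
  ∀ S : Finset (Fin n), S ⊆ J → ∑ i ∈ S, v i = 0 → S = ∅

lemma li_coe_iff {n m : ℕ} (v : Fin n → Fin m → ZMod 2) (J : Finset (Fin n)) :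
    LinearIndependent (ZMod 2) (fun x : (↑J : Set (Fin n)) => v x) ↔ OKcols v J := by
  rw [li_iff_finsets]
  exact ⟨fun h S hS => h S (by exact_mod_cast hS), fun h S hS => h S (by exact_mod_cast hS)⟩

/-- Transport of linear independence along an injection of indices together with a
linear equivalence matching the columns. -/
lemma li_transport {ι κ W W' : Type*} [AddCommGroup W] [Module (ZMod 2) W]
    [AddCommGroup W'] [Module (ZMod 2) W']
    (v : ι → W) (w : κ → W') (f : ι → κ) (L : W ≃ₗ[ZMod 2] W') (I : Set ι)
    (hinj : Set.InjOn f I) (hL : ∀ x ∈ I, L (v x) = w (f x)) :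
    LinearIndependent (ZMod 2) (fun x : I => v x) ↔
      LinearIndependent (ZMod 2) (fun y : f '' I => w y) := by
  rw [← linearIndependent_equiv' (Equiv.Set.imageOfInjOn f I hinj)
      (f := fun y : ↥(f '' I) => w ↑y) (g := fun x : ↥I => w (f ↑x)) rfl]
  have hcomp : (fun x : I => w (f x)) = (L : W →ₗ[ZMod 2] W') ∘ (fun x : I => v x) := by
    funext x
    exact (hL x x.2).symm
  rw [hcomp, LinearMap.linearIndependent_iff (L : W →ₗ[ZMod 2] W') L.ker]

/-- A criterion for matroid isomorphism via a ground-set bijection. -/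
lemma miso_of_bijOn {α β : Type*} {M : Matroid α} {N : Matroid β} (f : α → β)
    (hbij : Set.BijOn f M.E N.E)
    (h : ∀ I : Set α, I ⊆ M.E → (M.Indep I ↔ N.Indep (f '' I))) : M.MIso N := by
  refine ⟨hbij.equiv f, fun I => ?_⟩
  have him : Subtype.val '' ((hbij.equiv f) '' I) = f '' (Subtype.val '' I) := by
    rw [Set.image_image, Set.image_image]
    rfl
  rw [him]
  exact h _ (by rintro x ⟨⟨y, hy⟩, -, rfl⟩; exact hy)

/-- The columns of `P₉` indexed `0,…,6`, relabelled by the permutation `(2 3)(4 5)`;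
these represent `F₇✶`. -/
def qCols : Fin 7 → Fin 4 → ZMod 2 :=
  ![![1,0,0,0], ![0,1,0,0], ![0,0,0,1], ![0,0,1,0], ![1,0,1,1], ![0,1,1,1], ![1,1,0,1]]

set_option maxRecDepth 8000 in
lemma no_four_indep : ∀ T : Finset (Fin 7), 4 ≤ T.card → ¬ OKcols fanoCols T := by
  decide

set_option maxRecDepth 40000 in
lemma key3 : ∀ J : Finset (Fin 7),
    OKcols qCols J ↔ ∃ B : Finset (Fin 7), B ⊆ Jᶜ ∧ B.card = 3 ∧ OKcols fanoCols B := by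
  decide

end Aux

section FanoDual

variable {F : Matroid (Fin 7)}

lemma fano_base (hFE : F.E = Set.univ)
    (hFrep : ∀ I : Set (Fin 7),
      F.Indep I ↔ LinearIndependent (ZMod 2) (fun x : I => fanoCols x))
    (B : Finset (Fin 7)) (hcard : B.card = 3) (hok : OKcols fanoCols B) :
    F.IsBase ↑B := by
  have hind : F.Indep ↑B := (hFrep _).2 ((li_coe_iff _ _).2 hok)
  refine hind.isBase_of_forall_insert ?_
  intro e he hcon
  have he' : e ∉ (B : Set (Fin 7)) := he.2
  have hins : LinearIndependent (ZMod 2)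
      (fun x : (↑(insert e B) : Set (Fin 7)) => fanoCols x) := by
    have h0 := (hFrep _).1 hcon
    rwa [show (insert e (↑B : Set (Fin 7))) = ↑(insert e B) from
      (Finset.coe_insert e B).symm] at h0
  have hok4 := (li_coe_iff _ _).1 hins
  have h4 : (insert e B).card = 4 := by
    rw [Finset.card_insert_of_notMem (by simpa using he'), hcard]
  exact no_four_indep (insert e B) (by omega) hok4

lemma fano_dual_indep_iff (hFE : F.E = Set.univ)
    (hFrep : ∀ I : Set (Fin 7),
      F.Indep I ↔ LinearIndependent (ZMod 2) (fun x : I => fanoCols x))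
    (J : Set (Fin 7)) :
    F✶.Indep J ↔ LinearIndependent (ZMod 2) (fun x : J => qCols x) := by
  classical
  have hJc : ↑(J.toFinite.toFinset) = J := Set.Finite.coe_toFinset _
  rw [← hJc, li_coe_iff, Matroid.dual_indep_iff_exists']
  set Jf := J.toFinite.toFinset
  constructor
  · rintro ⟨-, B, hB, hdis⟩
    have hBi : F.Indep B := hB.indep
    have hBc : ↑(B.toFinite.toFinset) = B := Set.Finite.coe_toFinset _
    set Bf := B.toFinite.toFinset
    have hok : OKcols fanoCols Bf := by
      have h0 := (hFrep B).1 hBi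
      rw [← hBc] at h0
      exact (li_coe_iff _ _).1 h0
    have hcard : Bf.card = 3 := by
      have h012 : F.IsBase ↑({0,1,2} : Finset (Fin 7)) :=
        fano_base hFE hFrep _ (by decide) (by decide)
      have hn := hB.ncard_eq_ncard_of_isBase h012
      rw [Set.ncard_coe_finset, ← hBc, Set.ncard_coe_finset] at hn
      simpa using hn
    refine (key3 Jf).2 ⟨Bf, ?_, hcard, hok⟩
    intro x hx
    rw [Finset.mem_compl]
    intro hxJ
    exact (Set.disjoint_left.1 hdis (by exact_mod_cast hxJ)
      (hBc ▸ (Finset.mem_coe.2 hx)))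
  · intro h
    obtain ⟨B, hBsub, hcard, hok⟩ := (key3 Jf).1 h
    refine ⟨by rw [hFE]; exact Set.subset_univ _, ↑B, fano_base hFE hFrep B hcard hok, ?_⟩
    rw [Set.disjoint_left]
    intro a haJ haB
    have h1 := hBsub (by exact_mod_cast haB)
    rw [Finset.mem_compl] at h1
    exact h1 (by exact_mod_cast haJ)

end FanoDual

section Maps

/-- The ground-set map for `P₉ \ 7 ≅ S₈`. -/
def fdel7 : Fin 9 → Fin 8 := ![0, 4, 3, 1, 2, 6, 5, 0, 7]

/-- The ground-set map for `P₉ \ 8 ≅ S₈`. -/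
def fdel8 : Fin 9 → Fin 8 := ![0, 1, 2, 3, 4, 5, 6, 7, 0]

/-- The ground-set map for `P₉ \ {7,8} ≅ F₇✶`. -/
def fdel78 : Fin 9 → Fin 7 := ![0, 1, 3, 2, 5, 4, 6, 0, 0]

/-- The change-of-basis matrix for the isomorphism `P₉ \ 7 ≅ S₈`. -/
def Amat : Matrix (Fin 4) (Fin 4) (ZMod 2) := !![1,0,0,0; 0,1,0,1; 0,1,0,0; 0,1,1,0]

/-- The inverse of `Amat`. -/
def Bmat : Matrix (Fin 4) (Fin 4) (ZMod 2) := !![1,0,0,0; 0,0,1,0; 0,0,1,1; 0,1,1,0]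

/-- The `GF(2)`-linear equivalence of `GF(2)⁴` matching the deleted `P₉` columns with
the `S₈` columns in case of deleting column `7`. -/
def Lmap : (Fin 4 → ZMod 2) ≃ₗ[ZMod 2] (Fin 4 → ZMod 2) :=
  LinearEquiv.ofLinear (Matrix.toLin' Amat) (Matrix.toLin' Bmat)
    (by rw [← Matrix.toLin'_mul, show Amat * Bmat = 1 by decide, Matrix.toLin'_one])
    (by rw [← Matrix.toLin'_mul, show Bmat * Amat = 1 by decide, Matrix.toLin'_one])

lemma Lmap_apply (v : Fin 4 → ZMod 2) : Lmap v = Amat.mulVec v := by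
  simp [Lmap, Matrix.toLin'_apply]

lemma inj7 : ∀ x : Fin 9, x ≠ 7 → ∀ y : Fin 9, y ≠ 7 → fdel7 x = fdel7 y → x = y := by decide

lemma surj7 : ∀ y : Fin 8, ∃ x : Fin 9, x ≠ 7 ∧ fdel7 x = y := by decide

lemma inj8 : ∀ x : Fin 9, x ≠ 8 → ∀ y : Fin 9, y ≠ 8 → fdel8 x = fdel8 y → x = y := by decide

lemma surj8 : ∀ y : Fin 8, ∃ x : Fin 9, x ≠ 8 ∧ fdel8 x = y := by decide

lemma inj78 : ∀ x : Fin 9, x ≠ 7 → x ≠ 8 →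
    ∀ y : Fin 9, y ≠ 7 → y ≠ 8 → fdel78 x = fdel78 y → x = y := by decide

lemma surj78 : ∀ y : Fin 7, ∃ x : Fin 9, (x ≠ 7 ∧ x ≠ 8) ∧ fdel78 x = y := by decide

lemma col7 : ∀ x : Fin 9, x ≠ 7 → Amat.mulVec (p9Cols x) = s8Cols (fdel7 x) := by decide

lemma col8 : ∀ x : Fin 9, x ≠ 8 → p9Cols x = s8Cols (fdel8 x) := by decide

lemma col78 : ∀ x : Fin 9, x ≠ 7 → x ≠ 8 → p9Cols x = qCols (fdel78 x) := by decide

end Maps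

/-- P₉ \ 1 ≅ S₈, P₉ \ 3 ≅ S₈ and P₉ \ {1,3} ≅ F₇✶, where the two
spokes 1 and 3 correspond to the columns (1,1,1,1) and (1,1,0,0) of the matrix
representing P₉. -/
theorem p9_deletions (P : Matroid (Fin 9)) (S : Matroid (Fin 8)) (F : Matroid (Fin 7))
    (hPE : P.E = Set.univ)
    (hPrep : ∀ I : Set (Fin 9),
      P.Indep I ↔ LinearIndependent (ZMod 2) (fun x : I => p9Cols x))
    (hSE : S.E = Set.univ)
    (hSrep : ∀ I : Set (Fin 8),
      S.Indep I ↔ LinearIndependent (ZMod 2) (fun x : I => s8Cols x))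
    (hFE : F.E = Set.univ)
    (hFrep : ∀ I : Set (Fin 7),
      F.Indep I ↔ LinearIndependent (ZMod 2) (fun x : I => fanoCols x)) :
    (P.del {7}).MIso S ∧ (P.del {8}).MIso S ∧ (P.del {7, 8}).MIso F✶ := by
  classical
  have hE7 : (P.del {7}).E = (Set.univ \ {7} : Set (Fin 9)) := by
    simp [Matroid.del, hPE]
  have hE8 : (P.del {8}).E = (Set.univ \ {8} : Set (Fin 9)) := by
    simp [Matroid.del, hPE]
  have hE78 : (P.del {7, 8}).E = (Set.univ \ {7, 8} : Set (Fin 9)) := by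
    simp [Matroid.del, hPE]
  refine ⟨?_, ?_, ?_⟩
  · -- `P₉ \ 7 ≅ S₈`
    refine miso_of_bijOn fdel7 ?_ ?_
    · rw [hE7, hSE]
      refine ⟨fun x _ => trivial, ?_, ?_⟩
      · intro x hx y hy hxy
        exact inj7 x (by simpa using hx.2) y (by simpa using hy.2) hxy
      · intro y _
        obtain ⟨x, hx7, hfx⟩ := surj7 y
        exact ⟨x, ⟨trivial, by simpa using hx7⟩, hfx⟩
    · intro I hI
      rw [hE7] at hI
      have hI7 : ∀ x ∈ I, x ≠ (7 : Fin 9) := fun x hx => by simpa using (hI hx).2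
      have hIE : I ⊆ P.E \ {7} := by rw [hPE]; exact hI
      unfold Matroid.del
      rw [Matroid.restrict_indep_iff, and_iff_left hIE, hPrep, hSrep]
      exact li_transport p9Cols s8Cols fdel7 Lmap I
        (fun x hx y hy hxy => inj7 x (hI7 x hx) y (hI7 y hy) hxy)
        (fun x hx => by rw [Lmap_apply]; exact col7 x (hI7 x hx))
  · -- `P₉ \ 8 ≅ S₈`
    refine miso_of_bijOn fdel8 ?_ ?_
    · rw [hE8, hSE]
      refine ⟨fun x _ => trivial, ?_, ?_⟩
      · intro x hx y hy hxy
        exact inj8 x (by simpa using hx.2) y (by simpa using hy.2) hxy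
      · intro y _
        obtain ⟨x, hx8, hfx⟩ := surj8 y
        exact ⟨x, ⟨trivial, by simpa using hx8⟩, hfx⟩
    · intro I hI
      rw [hE8] at hI
      have hI8 : ∀ x ∈ I, x ≠ (8 : Fin 9) := fun x hx => by simpa using (hI hx).2
      have hIE : I ⊆ P.E \ {8} := by rw [hPE]; exact hI
      unfold Matroid.del
      rw [Matroid.restrict_indep_iff, and_iff_left hIE, hPrep, hSrep]
      exact li_transport p9Cols s8Cols fdel8 (LinearEquiv.refl _ _) I
        (fun x hx y hy hxy => inj8 x (hI8 x hx) y (hI8 y hy) hxy)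
        (fun x hx => by rw [LinearEquiv.refl_apply]; exact col8 x (hI8 x hx))
  · -- `P₉ \ {7,8} ≅ F₇✶`
    refine miso_of_bijOn fdel78 ?_ ?_
    · rw [hE78, Matroid.dual_ground, hFE]
      refine ⟨fun x _ => trivial, ?_, ?_⟩
      · intro x hx y hy hxy
        have hx2 : x ≠ 7 ∧ x ≠ 8 := by simpa using hx.2
        have hy2 : y ≠ 7 ∧ y ≠ 8 := by simpa using hy.2
        exact inj78 x hx2.1 hx2.2 y hy2.1 hy2.2 hxy
      · intro y _
        obtain ⟨x, hx78, hfx⟩ := surj78 y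
        refine ⟨x, ⟨trivial, ?_⟩, hfx⟩
        simpa using hx78
    · intro I hI
      rw [hE78] at hI
      have hI78 : ∀ x ∈ I, x ≠ (7 : Fin 9) ∧ x ≠ (8 : Fin 9) := fun x hx => by
        simpa using (hI hx).2
      have hIE : I ⊆ P.E \ {7, 8} := by rw [hPE]; exact hI
      unfold Matroid.del
      rw [Matroid.restrict_indep_iff, and_iff_left hIE, hPrep,
        fano_dual_indep_iff hFE hFrep]
      exact li_transport p9Cols qCols fdel78 (LinearEquiv.refl _ _) I
        (fun x hx y hy hxy =>
          inj78 x (hI78 x hx).1 (hI78 x hx).2 y (hI78 y hy).1 (hI78 y hy).2 hxy)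
        (fun x hx => by
          rw [LinearEquiv.refl_apply]
          exact col78 x (hI78 x hx).1 (hI78 x hx).2)
end
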